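/- Let u : ℝ² → ℝ be twice continuously differentiable on a neighborhood of the origin with ∂ₓu(0,0) = ∂ᵧu(0,0) = 0. Let h : ℝ → ℝ be differentiable on a neighborhood of 0 with h(0) = 0 and h'(0) = 0. Let η₁, η₂ : ℝ² → ℝ be functions such that the maps x ↦ η₁(x, h(x)) and x ↦ η₂(x, h(x)) are differentiable at x = 0, with η₁(0,0) = 0 and η₂(0,0) = 1. Suppose that for all x in a neighborhood of 0 one has η₁(x,h(x))·∂ₓu(x,h(x)) + η₂(x,h(x))·∂ᵧu(x,h(x)) = u(x,h(x)). Then the mixed second partial derivative satisfies ∂ₓ∂ᵧu(0,0) = 0. -/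

import Mathlib

/-- Key calculus step in the maximum principle at a corner (Theorem A.1):
differentiating the orthogonality identity `η₁ u_x + η₂ u_y = u` along the curve
`x ↦ (x, h(x))` at the origin gives `u_{xy}(0,0) = 0`. -/
theorem stmt_3 (u : ℝ × ℝ → ℝ) (h : ℝ → ℝ) (η₁ η₂ : ℝ × ℝ → ℝ)
    (hu : ContDiffAt ℝ 2 u (0, 0))
    (hux : fderiv ℝ u (0, 0) (1, 0) = 0)
    (huy : fderiv ℝ u (0, 0) (0, 1) = 0)
    (hhdiff : ∀ᶠ x in nhds (0 : ℝ), DifferentiableAt ℝ h x)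
    (hh0 : h 0 = 0) (hh'0 : deriv h 0 = 0)
    (hη₁diff : DifferentiableAt ℝ (fun x => η₁ (x, h x)) 0)
    (hη₂diff : DifferentiableAt ℝ (fun x => η₂ (x, h x)) 0)
    (hη₁0 : η₁ (0, 0) = 0) (hη₂0 : η₂ (0, 0) = 1)
    (hid : ∀ᶠ x in nhds (0 : ℝ),
      η₁ (x, h x) * fderiv ℝ u (x, h x) (1, 0)
        + η₂ (x, h x) * fderiv ℝ u (x, h x) (0, 1) = u (x, h x)) :
    fderiv ℝ (fun p => fderiv ℝ u p (0, 1)) (0, 0) (1, 0) = 0 := by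
  have hhd : HasDerivAt h 0 0 := by
    have := hhdiff.self_of_nhds.hasDerivAt
    rwa [hh'0] at this
  have hγ : HasDerivAt (fun x : ℝ => ((x, h x) : ℝ × ℝ)) ((1 : ℝ), (0 : ℝ)) 0 :=
    (hasDerivAt_id (0 : ℝ)).prodMk hhd
  have hγ0 : ((0 : ℝ), h 0) = ((0 : ℝ), (0 : ℝ)) := by rw [hh0]
  have hfd : ContDiffAt ℝ 1 (fderiv ℝ u) (0, 0) := hu.fderiv_right (by norm_num)
  have hfd' : DifferentiableAt ℝ (fderiv ℝ u) (0, 0) := hfd.differentiableAt one_ne_zero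
  have hudiff : DifferentiableAt ℝ u (0, 0) :=
    hu.differentiableAt (by norm_num)
  have hF1 : DifferentiableAt ℝ (fun p => fderiv ℝ u p (1, 0)) (0, 0) :=
    (ContinuousLinearMap.apply ℝ ℝ ((1 : ℝ), (0 : ℝ))).differentiableAt.comp _ hfd'
  have hF2 : DifferentiableAt ℝ (fun p => fderiv ℝ u p (0, 1)) (0, 0) :=
    (ContinuousLinearMap.apply ℝ ℝ ((0 : ℝ), (1 : ℝ))).differentiableAt.comp _ hfd'
  have hF1' : HasFDerivAt (fun p => fderiv ℝ u p (1, 0))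
      (fderiv ℝ (fun p => fderiv ℝ u p (1, 0)) (0, 0)) ((0 : ℝ), h 0) := by
    rw [hγ0]; exact hF1.hasFDerivAt
  have hF2' : HasFDerivAt (fun p => fderiv ℝ u p (0, 1))
      (fderiv ℝ (fun p => fderiv ℝ u p (0, 1)) (0, 0)) ((0 : ℝ), h 0) := by
    rw [hγ0]; exact hF2.hasFDerivAt
  have hu' : HasFDerivAt u (fderiv ℝ u (0, 0)) ((0 : ℝ), h 0) := by
    rw [hγ0]; exact hudiff.hasFDerivAt
  have hP : HasDerivAt (fun x => fderiv ℝ u (x, h x) (1, 0))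
      (fderiv ℝ (fun p => fderiv ℝ u p (1, 0)) (0, 0) (1, 0)) 0 :=
    (hF1'.comp_hasDerivAt 0 hγ :)
  have hQ : HasDerivAt (fun x => fderiv ℝ u (x, h x) (0, 1))
      (fderiv ℝ (fun p => fderiv ℝ u p (0, 1)) (0, 0) (1, 0)) 0 :=
    (hF2'.comp_hasDerivAt 0 hγ :)
  have hU : HasDerivAt (fun x => u (x, h x)) (fderiv ℝ u (0, 0) (1, 0)) 0 :=
    hu'.comp_hasDerivAt 0 hγ
  have hA : HasDerivAt (fun x => η₁ (x, h x)) (deriv (fun x => η₁ (x, h x)) 0) 0 :=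
    hη₁diff.hasDerivAt
  have hB : HasDerivAt (fun x => η₂ (x, h x)) (deriv (fun x => η₂ (x, h x)) 0) 0 :=
    hη₂diff.hasDerivAt
  -- left-hand side derivative
  have hLHS := ((hA.mul hP).add (hB.mul hQ))
  -- the LHS equals u ∘ γ eventually, so its derivative equals that of u ∘ γ
  have hU' : HasDerivAt (fun x => u (x, h x))
      (deriv (fun x => η₁ (x, h x)) 0 * fderiv ℝ u ((0 : ℝ), h 0) (1, 0)
        + η₁ ((0 : ℝ), h 0) * fderiv ℝ (fun p => fderiv ℝ u p (1, 0)) (0, 0) (1, 0)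
        + (deriv (fun x => η₂ (x, h x)) 0 * fderiv ℝ u ((0 : ℝ), h 0) (0, 1)
          + η₂ ((0 : ℝ), h 0) * fderiv ℝ (fun p => fderiv ℝ u p (0, 1)) (0, 0) (1, 0))) 0 :=
    hLHS.congr_of_eventuallyEq (by filter_upwards [hid] with x hx using hx.symm)
  have key := hU'.unique hU
  rw [hγ0] at key
  rw [hux, huy, hη₁0, hη₂0] at key
  linarith
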